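/- Let S be a regular AG-groupoid with left identity. A fuzzy subset μ is a fuzzy left ideal of S if and only if μ is a fuzzy bi-ideal of S (i.e., μ(x*y) ≥ min(μ(x),μ(y)) and μ((x*a)*y) ≥ min(μ(x), μ(y)) for all x, a, y). -/
import Mathlib


/-- In a regular AG-groupoid with left identity, fuzzy left ideals
    coincide with fuzzy bi-ideals. -/
theorem fuzzy_left_iff_bi {S : Type*} (mul : S → S → S)
    (hinv : ∀ a b c : S, mul (mul a b) c = mul (mul c b) a)
    (e : S) (he : ∀ x : S, mul e x = x)
    (hreg : ∀ a : S, ∃ x : S, a = mul (mul a x) a)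
    (μ : S → ℝ) (hμ0 : ∀ x, 0 ≤ μ x) (hμ1 : ∀ x, μ x ≤ 1) :
    (∀ x y : S, μ y ≤ μ (mul x y)) ↔
      ((∀ x y : S, min (μ x) (μ y) ≤ μ (mul x y)) ∧
       (∀ x a y : S, min (μ x) (μ y) ≤ μ (mul (mul x a) y))) := by
  constructor
  · intro h
    exact ⟨fun x y => le_trans (min_le_right _ _) (h x y),
           fun x a y => le_trans (min_le_right _ _) (h (mul x a) y)⟩
  · rintro ⟨h1, h2⟩ a b
    obtain ⟨x, hx⟩ := hreg b
    have key : mul a b = mul (mul b (mul (mul a e) x)) b := by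
      calc mul a b
          = mul a (mul (mul b x) b) := by rw [← hx]
        _ = mul (mul e a) (mul (mul b x) b) := by rw [he]
        _ = mul (mul (mul e e) a) (mul (mul b x) b) := by rw [he e]
        _ = mul (mul (mul a e) e) (mul (mul b x) b) := by rw [hinv e e a]
        _ = mul (mul (mul (mul b x) b) e) (mul a e) := by
              rw [hinv (mul a e) e (mul (mul b x) b)]
        _ = mul (mul (mul (mul b x) b) e) (mul e (mul a e)) := by
              rw [he (mul a e)]
        _ = mul (mul (mul e b) (mul b x)) (mul e (mul a e)) := by
              rw [hinv (mul b x) b e]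
        _ = mul (mul b (mul b x)) (mul e (mul a e)) := by rw [he b]
        _ = mul (mul (mul e (mul a e)) (mul b x)) b := by
              rw [hinv b (mul b x) (mul e (mul a e))]
        _ = mul (mul (mul (mul b x) (mul a e)) e) b := by
              rw [hinv e (mul a e) (mul b x)]
        _ = mul (mul (mul (mul (mul a e) x) b) e) b := by
              rw [hinv b x (mul a e)]
        _ = mul (mul (mul e b) (mul (mul a e) x)) b := by
              rw [hinv (mul (mul a e) x) b e]
        _ = mul (mul b (mul (mul a e) x)) b := by rw [he b]
    rw [key]
    have := h2 b (mul (mul a e) x) b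
    simpa using this
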